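/- For all natural numbers $n$ and all integers $m$ with $-n\le m\le n$, the spherical harmonic $Y_n^m$ satisfies the uniform bound $\sup_{(\theta,\phi)} |Y_n^m(\theta,\phi)| \le \sqrt{\frac{n+1}{2\pi}}$. -/

import Mathlib

open Real Complex

/-- The Legendre polynomial `P_n` via the Rodrigues formula, as a function on `ℝ`. -/
noncomputable def legendreFn (n : ℕ) : ℝ → ℝ :=
  fun x => (1 / (2 ^ n * (n.factorial : ℝ))) *
    iteratedDeriv n (fun y : ℝ => (y ^ 2 - 1) ^ n) x

/-- The associated Legendre function `P_n^m` for `m ≥ 0`: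
`P_n^m(x) = (-1)^m (1-x^2)^{m/2} (d/dx)^m P_n(x)`. -/
noncomputable def assocLegendre (n m : ℕ) (x : ℝ) : ℝ :=
  (-1 : ℝ) ^ m * (1 - x ^ 2) ^ ((m : ℝ) / 2) * iteratedDeriv m (legendreFn n) x

/-- The associated Legendre function for integer order, using
`P_n^{-m} = (-1)^m ((n-m)!/(n+m)!) P_n^m`. -/
noncomputable def assocLegendreZ (n : ℕ) (m : ℤ) (x : ℝ) : ℝ :=
  if 0 ≤ m then assocLegendre n m.toNat x
  else (-1 : ℝ) ^ (-m).toNat *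
    (((n - (-m).toNat).factorial : ℝ) / ((n + (-m).toNat).factorial : ℝ)) *
    assocLegendre n (-m).toNat x

/-- The spherical harmonic
`Y_n^m(θ,φ) = √((2n+1)/(4π) ⋅ (n-m)!/(n+m)!) P_n^m(cos θ) e^{imφ}`. -/
noncomputable def sphericalHarmonic (n : ℕ) (m : ℤ) (θ φ : ℝ) : ℂ :=
  (Real.sqrt ((2 * n + 1) / (4 * Real.pi) *
      ((((n : ℤ) - m).toNat.factorial : ℝ) / (((n : ℤ) + m).toNat.factorial : ℝ))) : ℝ) *
    (assocLegendreZ n m (Real.cos θ) : ℂ) * Complex.exp (Complex.I * m * φ)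


section LegendreAux
open Polynomial Finset


noncomputable def legW (n : ℕ) : ℝ[X] := (X ^ 2 - 1) ^ n
noncomputable def legA (n k : ℕ) : ℝ[X] := derivative^[k] (legW n)
noncomputable def legP (n : ℕ) : ℝ[X] :=
  C (1 / (2 ^ n * (n.factorial : ℝ))) * legA n n

lemma legA_deriv (n k : ℕ) : derivative (legA n k) = legA n (k + 1) :=
  (Function.iterate_succ_apply' _ _ _).symm

lemma legA_zero (n : ℕ) : legA n 0 = (X ^ 2 - 1) ^ n := rfl

lemma legS0 (n : ℕ) : ((X : ℝ[X]) ^ 2 - 1) * legA n 1 = 2 * (n : ℝ[X]) * X * legA n 0 := by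
  cases n with
  | zero => simp [legA, legW]
  | succ m =>
    have h1 : legA (m+1) 1 = derivative ((X ^ 2 - 1) ^ (m+1) : ℝ[X]) := rfl
    rw [h1, legA_zero, derivative_pow]
    simp only [Nat.add_sub_cancel, derivative_sub, derivative_one, derivative_X_pow,
      C_add, C_1, map_ofNat, Nat.cast_add, Nat.cast_one, Nat.cast_ofNat, C_eq_natCast]
    ring

lemma legS (n k : ℕ) :
    ((X : ℝ[X]) ^ 2 - 1) * legA n (k + 2) =
      (2 * (n : ℝ[X]) - 2 * (k : ℝ[X]) - 2) * X * legA n (k + 1) +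
        ((k : ℝ[X]) + 1) * (2 * (n : ℝ[X]) - (k : ℝ[X])) * legA n k := by
  induction k with
  | zero =>
    have h := congrArg derivative (legS0 n)
    simp only [derivative_mul, derivative_sub, derivative_one, derivative_X_pow,
      derivative_X, derivative_natCast, derivative_ofNat, legA_deriv, C_eq_natCast] at h
    push_cast at h ⊢
    linear_combination h
  | succ k ih =>
    have h := congrArg derivative ih
    simp only [derivative_mul, derivative_sub, derivative_add, derivative_one,
      derivative_X_pow, derivative_X, derivative_natCast, derivative_ofNat,
      legA_deriv, C_eq_natCast] at h
    push_cast at h ⊢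
    linear_combination h

lemma legDP (n m : ℕ) :
    derivative^[m] (legP n) = C (1 / (2 ^ n * (n.factorial : ℝ))) * legA n (n + m) := by
  rw [legP, iterate_derivative_C_mul]
  congr 1
  rw [legA, legA, legW, ← Function.iterate_add_apply, Nat.add_comm m n]

lemma legP_deriv (n m : ℕ) :
    derivative (derivative^[m] (legP n)) = derivative^[m + 1] (legP n) :=
  (Function.iterate_succ_apply' _ _ _).symm

lemma legP_ODE (n m : ℕ) :
    (1 - (X : ℝ[X]) ^ 2) * derivative^[m + 2] (legP n) =
      (2 * (m : ℝ[X]) + 2) * X * derivative^[m + 1] (legP n) -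
        ((n : ℝ[X]) + (m : ℝ[X]) + 1) * ((n : ℝ[X]) - (m : ℝ[X])) *
          derivative^[m] (legP n) := by
  have h := legS n (n + m)
  have e1 : n + m + 2 = n + (m + 2) := by omega
  have e2 : n + m + 1 = n + (m + 1) := by omega
  rw [e1, e2] at h
  rw [legDP n (m+2), legDP n (m+1), legDP n m]
  push_cast at h ⊢
  linear_combination (-(C (1 / (2 ^ n * (n.factorial : ℝ))))) * h

/-- coefficient `(n-m)!/(n+m)!` -/
noncomputable def legc (n m : ℕ) : ℝ := ((n - m).factorial : ℝ) / ((n + m).factorial : ℝ)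

lemma legc_nonneg (n m : ℕ) : 0 ≤ legc n m := by
  unfold legc; positivity

lemma legc_succ (n m : ℕ) (h : m < n) :
    legc n (m + 1) * (((n : ℝ) + m + 1) * ((n : ℝ) - m)) = legc n m := by
  unfold legc
  have h1 : n + (m + 1) = (n + m) + 1 := by omega
  have h2 : n - m = (n - (m + 1)) + 1 := by omega
  rw [h1, h2, Nat.factorial_succ, Nat.factorial_succ]
  have h3 : ((n : ℝ) - m) = ((n - (m+1) : ℕ) : ℝ) + 1 := by
    have : ((n - (m+1) : ℕ) : ℝ) = (n : ℝ) - (m + 1) := by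
      push_cast [Nat.cast_sub (by omega : m + 1 ≤ n)]; ring
    rw [this]; ring
  rw [h3]
  have f1 : ((n + m).factorial : ℝ) ≠ 0 := Nat.cast_ne_zero.2 (Nat.factorial_ne_zero _)
  have f2 : ((n : ℝ) + m + 1) ≠ 0 := by positivity
  push_cast
  field_simp

noncomputable def legG (n m : ℕ) : ℝ[X] :=
  2 * C (legc n m) * (1 - X ^ 2) ^ m * derivative^[m] (legP n) * derivative^[m + 1] (legP n)

noncomputable def legT (n m : ℕ) : ℝ[X] :=
  2 * C (legc n m) * (1 - X ^ 2) ^ m * (derivative^[m] (legP n)) ^ 2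

lemma legT_step (n m : ℕ) (h : m < n) :
    derivative (legT n (m + 1)) = legG n (m + 1) - legG n m := by
  have hODE := legP_ODE n m
  have hC := congrArg C (legc_succ n m h)
  simp only [C_mul, C_add, C_sub, C_1, map_ofNat, C_eq_natCast] at hC
  unfold legT legG
  simp only [derivative_mul, derivative_pow, derivative_sub, derivative_one,
    derivative_X_pow, derivative_C, derivative_X, derivative_ofNat, legP_deriv, Nat.add_sub_cancel, C_add, C_1,
    map_ofNat, C_eq_natCast, pow_one]
  push_cast
  linear_combination (2 * C (legc n (m+1)) * (1 - X^2)^m * derivative^[m+1] (legP n)) * hODE -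
    (2 * (1 - X^2)^m * derivative^[m] (legP n) * derivative^[m+1] (legP n)) * hC

noncomputable def legQ (n : ℕ) : ℝ[X] := ∑ m ∈ range (n + 1), legT n m

lemma legc_zero (n : ℕ) : legc n 0 = 1 := by
  simp [legc, div_self, Nat.cast_ne_zero.2 (Nat.factorial_ne_zero n)]

lemma legP_natDegree (n : ℕ) : (legP n).natDegree ≤ n := by
  have h1 : (legW n).natDegree ≤ 2 * n := by
    unfold legW
    have h0 : ((X : ℝ[X]) ^ 2 - 1).natDegree ≤ 2 := by
      refine (natDegree_sub_le _ _).trans ?_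
      simp [natDegree_X_pow]
    calc ((X ^ 2 - 1 : ℝ[X]) ^ n).natDegree ≤ n * ((X ^ 2 - 1 : ℝ[X])).natDegree :=
          natDegree_pow_le
      _ ≤ n * 2 := Nat.mul_le_mul_left n h0
      _ = 2 * n := by ring
  have h2 : (legA n n).natDegree ≤ (legW n).natDegree - n := natDegree_iterate_derivative _ _
  have h3 : (legP n).natDegree ≤ (legA n n).natDegree := natDegree_C_mul_le _ _
  omega

lemma legP_high (n : ℕ) : derivative^[n + 1] (legP n) = 0 :=
  iterate_derivative_eq_zero (Nat.lt_succ_of_le (legP_natDegree n))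

lemma legG_top (n : ℕ) : legG n n = 0 := by
  rw [legG, legP_high, mul_zero]

lemma legQ_deriv (n : ℕ) : derivative (legQ n) = derivative ((legP n) ^ 2) := by
  rw [legQ, Finset.sum_range_succ', derivative_add, derivative_sum,
    Finset.sum_congr rfl (fun i hi => legT_step n i (mem_range.1 hi)),
    Finset.sum_range_sub (legG n), legG_top]
  have h0 : legT n 0 = 2 * (legP n) ^ 2 := by
    simp [legT, legc_zero]
  have g0 : legG n 0 = 2 * legP n * derivative^[0 + 1] (legP n) := by
    simp [legG, legc_zero]
  have hd : derivative (legP n) = derivative^[0 + 1] (legP n) := by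
    simpa using legP_deriv n 0
  rw [h0, g0]
  simp only [derivative_mul, derivative_ofNat, derivative_pow, pow_one, Nat.cast_ofNat,
    map_ofNat, hd]
  ring

lemma legP_eval_one (n : ℕ) : (legP n).eval 1 = 1 := by
  have hfac : legW n = (X + 1) ^ n * (X - C 1) ^ n := by
    rw [legW, ← mul_pow]
    congr 1
    simp [C_1]
    ring
  have hA : (legA n n).eval 1 = 2 ^ n * n.factorial := by
    rw [legA, hfac, iterate_derivative_mul, eval_finset_sum]
    rw [Finset.sum_eq_single_of_mem n (self_mem_range_succ n)]
    · simp only [Nat.choose_self, one_smul, Nat.sub_self, Function.iterate_zero,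
        id_eq, iterate_derivative_X_sub_pow_self, eval_mul, eval_pow, eval_add,
        eval_X, eval_one, eval_natCast]
      norm_num
    · intro k hk hkn
      have hk' : k < n := lt_of_le_of_ne (Nat.lt_succ_iff.1 (mem_range.1 hk)) hkn
      rw [iterate_derivative_X_sub_pow]
      have hnk : n - k ≠ 0 := by omega
      simp [eval_smul, zero_pow hnk]
  rw [legP, eval_mul, eval_C, hA]
  have : (2:ℝ) ^ n * (n.factorial : ℝ) ≠ 0 := by positivity
  field_simp

lemma legQ_eval_one (n : ℕ) : (legQ n).eval 1 = 2 := by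
  rw [legQ, eval_finset_sum]
  rw [Finset.sum_eq_single_of_mem 0 (mem_range.2 (Nat.succ_pos n))]
  · simp [legT, legc_zero, legP_eval_one]
  · intro k hk hk0
    simp [legT, zero_pow hk0]

lemma legQ_eq (n : ℕ) : legQ n = (legP n) ^ 2 + 1 := by
  have hder : derivative (legQ n - (legP n) ^ 2) = 0 := by
    rw [derivative_sub, legQ_deriv, sub_self]
  have hc := eq_C_of_derivative_eq_zero hder
  have he := congrArg (eval 1) hc
  simp only [eval_sub, eval_pow, legQ_eval_one, legP_eval_one, eval_C, one_pow] at he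
  rw [← he] at hc
  have : legQ n - (legP n) ^ 2 = 1 := by rw [hc]; norm_num
  linear_combination this

lemma key_bound (n m : ℕ) (hm : m ≤ n) (x : ℝ) (hx1 : -1 ≤ x) (hx2 : x ≤ 1) :
    legc n m * (1 - x ^ 2) ^ m * ((derivative^[m] (legP n)).eval x) ^ 2 ≤ 1 := by
  have hy : (0:ℝ) ≤ 1 - x ^ 2 := by nlinarith
  have hQ : (legQ n).eval x = ((legP n).eval x) ^ 2 + 1 := by rw [legQ_eq]; simp
  have hterm : ∀ k, (legT n k).eval x
      = 2 * legc n k * (1 - x ^ 2) ^ k * ((derivative^[k] (legP n)).eval x) ^ 2 := by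
    intro k; simp [legT]
  have hcn : ∀ k, 0 ≤ legc n k := fun k => by unfold legc; positivity
  have hnonneg : ∀ k ∈ range (n + 1), 0 ≤ (legT n k).eval x := by
    intro k _
    rw [hterm]
    have := hcn k
    positivity
  have hsum : (legQ n).eval x = ∑ k ∈ range (n + 1), (legT n k).eval x := by
    rw [legQ, eval_finset_sum]
  have hP2 : ((legP n).eval x) ^ 2 ≤ 1 := by
    have h0 := Finset.single_le_sum hnonneg (mem_range.2 (Nat.succ_pos n))
    rw [← hsum, hQ, hterm, legc_zero] at h0
    simp only [Function.iterate_zero_apply, pow_zero, mul_one, one_mul] at h0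
    nlinarith [h0]
  have hm' := Finset.single_le_sum hnonneg (mem_range.2 (Nat.lt_succ_of_le hm))
  rw [← hsum, hQ, hterm] at hm'
  nlinarith [hm', hP2]

lemma eval_iteratedDeriv (p : Polynomial ℝ) (m : ℕ) :
    iteratedDeriv m (fun x => p.eval x) = fun x => (Polynomial.derivative^[m] p).eval x := by
  induction m with
  | zero => simp
  | succ k ih =>
    rw [iteratedDeriv_succ, ih]
    funext x
    rw [Function.iterate_succ_apply']
    exact Polynomial.deriv _

lemma iteratedDeriv_legendreFn (n m : ℕ) (x : ℝ) :
    iteratedDeriv m (legendreFn n) x = (Polynomial.derivative^[m] (legP n)).eval x := by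
  have h1 : legendreFn n = fun x => (legP n).eval x := by
    funext y
    unfold legendreFn
    have h2 : (fun t : ℝ => (t ^ 2 - 1) ^ n)
        = fun t => ((Polynomial.X ^ 2 - 1 : Polynomial ℝ) ^ n).eval t := by
      funext t; simp
    rw [h2, eval_iteratedDeriv]
    simp [legP, legA, legW]
  rw [h1, eval_iteratedDeriv]

/-- squared bound on the associated Legendre function -/
lemma assoc_sq_bound (n m : ℕ) (hm : m ≤ n) (θ : ℝ) :
    legc n m * (assocLegendre n m (Real.cos θ)) ^ 2 ≤ 1 := by
  set x := Real.cos θ with hxdef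
  have hx1 : -1 ≤ x := Real.neg_one_le_cos θ
  have hx2 : x ≤ 1 := Real.cos_le_one θ
  have hy : (0:ℝ) ≤ 1 - x ^ 2 := by nlinarith
  have hr : ((1 - x ^ 2) ^ ((m : ℝ) / 2)) ^ 2 = (1 - x ^ 2) ^ m := by
    rw [← Real.rpow_natCast ((1 - x ^ 2) ^ ((m : ℝ) / 2)) 2, ← Real.rpow_mul hy]
    norm_num
  have habs : (assocLegendre n m x) ^ 2
      = (1 - x ^ 2) ^ m * ((Polynomial.derivative^[m] (legP n)).eval x) ^ 2 := by
    unfold assocLegendre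
    rw [iteratedDeriv_legendreFn]
    rw [mul_pow, mul_pow, hr]
    have h1 : ((-1:ℝ) ^ m) ^ 2 = 1 := by
      rw [← pow_mul, mul_comm, pow_mul]; norm_num
    rw [h1]; ring
  rw [habs, ← mul_assoc]
  exact key_bound n m hm x hx1 hx2

theorem sphericalHarmonic_abs_le_aux (n : ℕ) (m : ℤ)
    (hm₁ : -(n : ℤ) ≤ m) (hm₂ : m ≤ n) (θ φ : ℝ) :
    ‖sphericalHarmonic n m θ φ‖ ≤ Real.sqrt ((n + 1) / (2 * Real.pi)) := by
  have hpi := Real.pi_pos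
  set K : ℝ := (2 * n + 1) / (4 * Real.pi) *
      ((((n : ℤ) - m).toNat.factorial : ℝ) / (((n : ℤ) + m).toNat.factorial : ℝ)) with hK
  have hKnn : 0 ≤ K := by positivity
  set a : ℝ := assocLegendreZ n m (Real.cos θ) with ha
  have hexp : ‖Complex.exp (Complex.I * m * φ)‖ = 1 := by
    rw [Complex.norm_exp]
    have : (Complex.I * m * φ).re = 0 := by simp
    rw [this, Real.exp_zero]
  have habs : ‖sphericalHarmonic n m θ φ‖ = Real.sqrt K * |a| := by
    unfold sphericalHarmonic
    rw [norm_mul, norm_mul, hexp, mul_one, Complex.norm_real, Complex.norm_real, Real.norm_eq_abs, Real.norm_eq_abs,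
      _root_.abs_of_nonneg (Real.sqrt_nonneg K)]
  rw [habs, ← Real.sqrt_sq_eq_abs, ← Real.sqrt_mul hKnn]
  apply Real.sqrt_le_sqrt
  -- now: K * a ^ 2 ≤ (n + 1) / (2 * π)
  have main : ∀ k : ℕ, k ≤ n → legc n k * (assocLegendre n k (Real.cos θ)) ^ 2 ≤ 1 :=
    fun k hk => assoc_sq_bound n k hk θ
  have step2 : K * a ^ 2 ≤ (2 * n + 1) / (4 * Real.pi) := by
    rcases le_or_gt 0 m with hm | hm
    · -- m ≥ 0
      set k := m.toNat with hk
      have hkn : k ≤ n := by omega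
      have e1 : ((n : ℤ) - m).toNat = n - k := by omega
      have e2 : ((n : ℤ) + m).toNat = n + k := by omega
      have haa : a = assocLegendre n k (Real.cos θ) := by
        rw [ha, assocLegendreZ, if_pos hm]
      rw [hK, e1, e2, haa]
      have := main k hkn
      rw [legc] at this
      rw [mul_assoc]
      exact mul_le_of_le_one_right (by positivity) this
    · -- m < 0
      set k := (-m).toNat with hk
      have hkn : k ≤ n := by omega
      have e1 : ((n : ℤ) - m).toNat = n + k := by omega
      have e2 : ((n : ℤ) + m).toNat = n - k := by omega
      have haa : a = (-1 : ℝ) ^ k *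
          (((n - k).factorial : ℝ) / ((n + k).factorial : ℝ)) *
          assocLegendre n k (Real.cos θ) := by
        rw [ha, assocLegendreZ, if_neg (not_le.2 hm)]
      rw [hK, e1, e2, haa]
      have hb := main k hkn
      rw [legc] at hb
      set b := assocLegendre n k (Real.cos θ)
      have h1 : ((-1:ℝ) ^ k) ^ 2 = 1 := by
        rw [← pow_mul, mul_comm, pow_mul]; norm_num
      have hf1 : (0:ℝ) < ((n - k).factorial : ℝ) := Nat.cast_pos.2 (Nat.factorial_pos _)
      have hf2 : (0:ℝ) < ((n + k).factorial : ℝ) := Nat.cast_pos.2 (Nat.factorial_pos _)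
      have expand : ((n + k).factorial : ℝ) / ((n - k).factorial : ℝ) *
          ((-1:ℝ) ^ k * (((n - k).factorial : ℝ) / ((n + k).factorial : ℝ)) * b) ^ 2
          = ((n - k).factorial : ℝ) / ((n + k).factorial : ℝ) * b ^ 2 := by
        rw [mul_pow, mul_pow, h1, one_mul, div_pow]
        field_simp
      rw [mul_assoc, expand]
      exact mul_le_of_le_one_right (by positivity) hb
  refine step2.trans ?_
  rw [div_le_div_iff₀ (by positivity) (by positivity)]
  nlinarith [Real.pi_pos]

end LegendreAux

/-- Uniform bound `‖Y_n^m‖_∞ ≤ √((n+1)/(2π))` on the spherical harmonics. -/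
theorem sphericalHarmonic_abs_le (n : ℕ) (m : ℤ)
    (hm₁ : -(n : ℤ) ≤ m) (hm₂ : m ≤ n) (θ φ : ℝ) :
    ‖sphericalHarmonic n m θ φ‖ ≤ Real.sqrt ((n + 1) / (2 * Real.pi)) :=
  sphericalHarmonic_abs_le_aux n m hm₁ hm₂ θ φ
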